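/- Let M ⊆ N be finitely generated additive submonoids of ℚ^d, and let C = ℝ₊M ⊆ ℝ^d be the set of all finite linear combinations of elements of M with nonnegative real coefficients. Then the integral closure of M in N, namely {y ∈ N : k·y ∈ M for some positive integer k} = C ∩ N, is a finitely generated monoid. -/

import Mathlib

/-- The canonical embedding `ℚ^d → ℝ^d`. -/
noncomputable def ratToReal {d : ℕ} (x : Fin d → ℚ) : Fin d → ℝ :=
  fun i => (x i : ℝ)

/-- `ℝ₊M ⊆ ℝ^d`: all finite linear combinations of elements of `M ⊆ ℚ^d`
with nonnegative real coefficients. -/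
def realCone {d : ℕ} (M : AddSubmonoid (Fin d → ℚ)) : Set (Fin d → ℝ) :=
  {y | ∃ (n : ℕ) (c : Fin n → ℝ) (v : Fin n → (Fin d → ℚ)),
    (∀ i, 0 ≤ c i) ∧ (∀ i, v i ∈ M) ∧ y = ∑ i, c i • ratToReal (v i)}

lemma finset_enum {α : Type*} (S : Finset α) :
    ∃ (n : ℕ) (f : Fin n → α), Set.range f = (S : Set α) := by
  refine ⟨S.card, fun i => ((S.equivFin.symm i : {x // x ∈ S}) : α), ?_⟩
  rw [show (fun i => ((S.equivFin.symm i : {x // x ∈ S}) : α)) =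
    Subtype.val ∘ S.equivFin.symm from rfl,
    Function.Surjective.range_comp S.equivFin.symm.surjective]
  ext x
  simp

section Helpers

variable {A : Type*} [AddCommMonoid A]

/-- The additive hom `ℕ^n → A` sending `b` to `∑ i, b i • v i`. -/
def combHom {n : ℕ} (v : Fin n → A) : (Fin n → ℕ) →+ A where
  toFun b := ∑ i, b i • v i
  map_zero' := by simp
  map_add' b c := by
    simp [add_nsmul, Finset.sum_add_distrib]

lemma combHom_apply {n : ℕ} (v : Fin n → A) (b : Fin n → ℕ) :
    combHom v b = ∑ i, b i • v i := rfl

lemma closure_range_eq_mrange {n : ℕ} (v : Fin n → A) :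
    AddSubmonoid.closure (Set.range v) = AddMonoidHom.mrange (combHom v) := by
  apply le_antisymm
  · rw [AddSubmonoid.closure_le]
    rintro x ⟨i, rfl⟩
    have h : combHom v (Pi.single i 1) = v i := by
      simp [combHom_apply, Pi.single_apply]
    rw [← h]
    exact AddMonoidHom.mem_mrange.mpr ⟨Pi.single i 1, rfl⟩
  · rintro x ⟨b, rfl⟩
    rw [combHom_apply]
    exact AddSubmonoid.sum_mem _ fun i _ =>
      AddSubmonoid.nsmul_mem _ (AddSubmonoid.subset_closure (Set.mem_range_self i)) _

lemma mem_closure_range_iff {n : ℕ} (v : Fin n → A) (y : A) :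
    y ∈ AddSubmonoid.closure (Set.range v) ↔ ∃ b : Fin n → ℕ, y = ∑ i, b i • v i := by
  rw [closure_range_eq_mrange]
  constructor
  · rintro ⟨b, rfl⟩; exact ⟨b, rfl⟩
  · rintro ⟨b, rfl⟩; exact ⟨b, rfl⟩

end Helpers

section Ker
variable {ι : Type*} [Fintype ι] {A : Type*} [AddCommMonoid A]

lemma sum_lt_of_le_of_ne {x y : ι → ℕ} (hle : y ≤ x) (hne : y ≠ x) :
    ∑ i, y i < ∑ i, x i := by
  obtain ⟨j, hj⟩ : ∃ j, y j ≠ x j := by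
    by_contra h; push_neg at h; exact hne (funext h)
  exact Finset.sum_lt_sum (fun i _ => hle i) ⟨j, Finset.mem_univ j, lt_of_le_of_ne (hle j) hj⟩

/-- The kernel of an additive hom from `ℕ^ι` is a finitely generated monoid. -/
lemma mker_fg (g : ((ι → ℕ)) →+ A) : (AddMonoidHom.mker g).FG := by
  classical
  set K := AddMonoidHom.mker g with hK
  set Min : Set (ι → ℕ) := {x | x ∈ K ∧ x ≠ 0 ∧ ∀ y ∈ K, y ≠ 0 → y ≤ x → y = x} with hMin
  -- Min is finite by Dickson's lemma
  have hfin : Min.Finite := by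
    by_contra hinf
    have hinf' : Min.Infinite := hinf
    have f := Set.Infinite.natEmbedding Min hinf'
    obtain ⟨a, b, hab, hle⟩ := (Set.isPWO_of_wellQuasiOrderedLE Min).exists_lt (f := fun n => (f n : ι → ℕ)) (fun n => (f n).2)
    have heq := ((f b).2).2.2 (f a) ((f a).2).1 ((f a).2).2.1 hle
    exact (Nat.ne_of_lt hab) (f.injective (Subtype.ext heq))
  -- Min generates K
  have hgen : AddSubmonoid.closure Min = K := by
    apply le_antisymm
    · rw [AddSubmonoid.closure_le]; exact fun x hx => hx.1
    · suffices main : ∀ n (x : ι → ℕ), x ∈ K → (∑ i, x i) = n → x ∈ AddSubmonoid.closure Min by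
        exact fun x hx => main _ x hx rfl
      intro n
      induction n using Nat.strong_induction_on with
      | _ n IH =>
        intro x hx hn
        by_cases hx0 : x = 0
        · exact hx0 ▸ (AddSubmonoid.closure Min).zero_mem
        · -- pick an element of K \ {0} below x with minimal coordinate sum
          set T : Set (ι → ℕ) := {z | z ∈ K ∧ z ≠ 0 ∧ z ≤ x} with hT
          have hTne : {k | ∃ z ∈ T, ∑ i, z i = k}.Nonempty := ⟨_, x, ⟨hx, hx0, le_rfl⟩, rfl⟩
          obtain ⟨z, hzT, hzs⟩ := Nat.sInf_mem hTne
          have hzmin : z ∈ Min := by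
            refine ⟨hzT.1, hzT.2.1, fun y hy hy0 hyz => ?_⟩
            have hyT : y ∈ T := ⟨hy, hy0, le_trans hyz hzT.2.2⟩
            have h1 : ∑ i, z i ≤ ∑ i, y i := hzs ▸ Nat.sInf_le ⟨y, hyT, rfl⟩
            by_contra hne
            exact absurd h1 (not_le.mpr (sum_lt_of_le_of_ne hyz hne))
          -- subtract z from x
          set w : ι → ℕ := fun i => x i - z i with hw
          have hwz : w + z = x := funext fun i => Nat.sub_add_cancel (hzT.2.2 i)
          have hwK : w ∈ K := by
            have : g w + g z = g x := by rw [← map_add, hwz]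
            have hz0 : g z = (0 : A) := hzT.1
            have hx0' : g x = (0 : A) := hx
            rw [hz0, hx0', add_zero] at this
            exact this
          have hsum : ∑ i, w i < ∑ i, x i := by
            have h1 : (∑ i, w i) + (∑ i, z i) = ∑ i, x i := by
              rw [← Finset.sum_add_distrib]; exact congrArg _ (funext fun i => congrFun hwz i)
            have h2 : 0 < ∑ i, z i := by
              rcases Nat.eq_zero_or_pos (∑ i, z i) with h | h
              · refine absurd (funext fun i => ?_) hzT.2.1
                exact (Finset.sum_eq_zero_iff).mp h i (Finset.mem_univ i)
              · exact h
            exact h1 ▸ Nat.lt_add_of_pos_right h2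
          have hwcl := IH _ (hn ▸ hsum) w hwK rfl
          have hfin' : w + z ∈ AddSubmonoid.closure Min :=
            AddSubmonoid.add_mem _ hwcl (AddSubmonoid.subset_closure hzmin)
          simpa only [hwz] using hfin'
  exact ⟨hfin.toFinset, by rw [Set.Finite.coe_toFinset, hgen]⟩
end Ker

/-- Conical Carathéodory: a nonnegative combination can be rewritten as a nonnegative
combination of a linearly independent subfamily. -/
lemma cone_caratheodory {V : Type*} [AddCommGroup V] [Module ℝ V] :
    ∀ (n : ℕ) (c : Fin n → ℝ) (w : Fin n → V), (∀ i, 0 ≤ c i) →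
    ∃ (k : ℕ) (c' : Fin k → ℝ) (w' : Fin k → V), (∀ i, 0 ≤ c' i) ∧
      (∀ i, w' i ∈ Set.range w) ∧ LinearIndependent ℝ w' ∧
      ∑ i, c' i • w' i = ∑ i, c i • w i := by
  intro n
  induction n using Nat.strong_induction_on with
  | _ n IH =>
    intro c w hc
    by_cases hli : LinearIndependent ℝ w
    · exact ⟨n, c, w, hc, fun i => Set.mem_range_self i, hli, rfl⟩
    · obtain ⟨t, ht0, i₀, hti₀⟩ := Fintype.not_linearIndependent_iff.mp hli
      -- reduce to the case where some coefficient is positive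
      have key : ∀ t : Fin n → ℝ, (∑ i, t i • w i = 0) → (∃ i, 0 < t i) →
          ∃ (k : ℕ) (c' : Fin k → ℝ) (w' : Fin k → V), (∀ i, 0 ≤ c' i) ∧
            (∀ i, w' i ∈ Set.range w) ∧ LinearIndependent ℝ w' ∧
            ∑ i, c' i • w' i = ∑ i, c i • w i := by
        intro t ht0 ⟨j₀, hj₀⟩
        rcases n with _ | n'
        · exact absurd j₀.pos (by omega)
        -- the minimizer of c i / t i over positive t i
        obtain ⟨p, hp, hpmin⟩ := Finset.exists_min_image
          (Finset.univ.filter fun i => 0 < t i) (fun i => c i / t i)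
          ⟨j₀, Finset.mem_filter.mpr ⟨Finset.mem_univ _, hj₀⟩⟩
        have htp : 0 < t p := (Finset.mem_filter.mp hp).2
        set lam := c p / t p with hlam
        have hlam0 : 0 ≤ lam := div_nonneg (hc p) htp.le
        set c2 : Fin (n' + 1) → ℝ := fun i => c i - lam * t i with hc2
        have hc2nn : ∀ i, 0 ≤ c2 i := by
          intro i
          rcases le_or_gt (t i) 0 with h | h
          · have : lam * t i ≤ 0 := mul_nonpos_of_nonneg_of_nonpos hlam0 h
            simp only [hc2]; linarith [hc i]
          · have hle : lam ≤ c i / t i :=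
              hpmin i (Finset.mem_filter.mpr ⟨Finset.mem_univ _, h⟩)
            have := (le_div_iff₀ h).mp hle
            simp only [hc2]; linarith
        have hc2p : c2 p = 0 := by
          simp only [hc2, hlam]
          field_simp
          ring
        have hsum2 : ∑ i, c2 i • w i = ∑ i, c i • w i := by
          simp only [hc2, sub_smul]
          rw [Finset.sum_sub_distrib]
          have : ∑ x : Fin (n' + 1), (lam * t x) • w x = lam • ∑ x, t x • w x := by
            rw [Finset.smul_sum]
            exact Finset.sum_congr rfl fun x _ => (smul_smul lam (t x) (w x)).symm
          rw [this, ht0, smul_zero, sub_zero]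
        -- drop index p
        set c3 : Fin n' → ℝ := fun j => c2 (p.succAbove j) with hc3
        set w3 : Fin n' → V := fun j => w (p.succAbove j) with hw3
        have hsum3 : ∑ j, c3 j • w3 j = ∑ i, c i • w i := by
          rw [← hsum2, Fin.sum_univ_succAbove (fun i => c2 i • w i) p, hc2p, zero_smul, zero_add]
        obtain ⟨k, c', w', h1, h2, h3, h4⟩ := IH n' (Nat.lt_succ_self n') c3 w3
          (fun j => hc2nn _)
        exact ⟨k, c', w', h1, fun i => by
          obtain ⟨j, hj⟩ := h2 i; exact ⟨p.succAbove j, hj⟩, h3, by rw [h4, hsum3]⟩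
      rcases lt_trichotomy (t i₀) 0 with h | h | h
      · exact key (-t) (by simpa using ht0) ⟨i₀, by simpa using h⟩
      · exact absurd h hti₀
      · exact key t ht0 ⟨i₀, h⟩


lemma ratToReal_sum {d k : ℕ} (a : Fin k → ℚ) (z : Fin k → (Fin d → ℚ)) :
    ratToReal (∑ i, a i • z i) = ∑ i, (a i : ℝ) • ratToReal (z i) := by
  funext j
  simp only [ratToReal, Finset.sum_apply, Pi.smul_apply, smul_eq_mul]
  push_cast
  rfl

/-- A rational vector which is a real nonnegative combination of a linearly independent
family of rational vectors is a rational nonnegative combination of them. -/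
lemma rat_coeffs {d k : ℕ} (v' : Fin k → (Fin d → ℚ)) (c' : Fin k → ℝ)
    (hli : LinearIndependent ℝ (fun i => ratToReal (v' i))) (hc : ∀ i, 0 ≤ c' i)
    (y : Fin d → ℚ) (hy : ratToReal y = ∑ i, c' i • ratToReal (v' i)) :
    ∃ a : Fin k → ℚ, (∀ i, 0 ≤ a i) ∧ y = ∑ i, a i • v' i := by
  classical
  set U : Submodule ℚ (Fin d → ℚ) := Submodule.span ℚ (Set.range v') with hU
  -- the standard "basis" family
  set e : Fin d → (Fin d → ℚ) := fun i j => if i = j then 1 else 0 with he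
  have hy_span : y ∈ U := by
    by_contra hns
    have hmk : (U.mkQ y : (Fin d → ℚ) ⧸ U) ≠ 0 := by
      rw [Submodule.mkQ_apply]
      intro h
      exact hns ((Submodule.Quotient.mk_eq_zero U).mp h)
    obtain ⟨φ, hφ⟩ : ∃ φ : Module.Dual ℚ ((Fin d → ℚ) ⧸ U), φ (U.mkQ y) ≠ 0 := by
      by_contra hall
      push_neg at hall
      exact hmk ((Module.forall_dual_apply_eq_zero_iff ℚ _).mp hall)
    set F : (Fin d → ℚ) →ₗ[ℚ] ℚ := φ.comp U.mkQ with hF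
    have hFv : ∀ i, F (v' i) = 0 := by
      intro i
      have : U.mkQ (v' i) = 0 := by
        rw [Submodule.mkQ_apply]
        exact (Submodule.Quotient.mk_eq_zero U).mpr
          (Submodule.subset_span (Set.mem_range_self i))
      simp [hF, this]
    have hrep : ∀ z : Fin d → ℚ, F z = ∑ j, z j * F (e j) := by
      intro z
      conv_lhs => rw [pi_eq_sum_univ z]
      rw [map_sum]
      exact Finset.sum_congr rfl fun j _ => by rw [map_smul, smul_eq_mul]
    -- real version of F
    set Fr : (Fin d → ℝ) →ₗ[ℝ] ℝ :=
      { toFun := fun x => ∑ j, x j * ((F (e j) : ℚ) : ℝ)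
        map_add' := fun x y => by
          simp only [Pi.add_apply, add_mul]
          exact Finset.sum_add_distrib
        map_smul' := fun r x => by
          simp only [Pi.smul_apply, smul_eq_mul, RingHom.id_apply, Finset.mul_sum, mul_assoc] }
      with hFr
    have hFrRat : ∀ z : Fin d → ℚ, Fr (ratToReal z) = ((F z : ℚ) : ℝ) := by
      intro z
      have : Fr (ratToReal z) = ∑ j, ((z j : ℝ)) * ((F (e j) : ℚ) : ℝ) := rfl
      rw [this, hrep z]
      push_cast
      rfl
    have h1 : Fr (ratToReal y) = 0 := by
      rw [hy, map_sum]
      refine Finset.sum_eq_zero fun i _ => ?_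
      rw [map_smul, hFrRat (v' i), hFv i]
      simp
    rw [hFrRat y] at h1
    have : F y = 0 := by exact_mod_cast h1
    exact hφ (by simpa [hF] using this)
  obtain ⟨a, ha⟩ := (Submodule.mem_span_range_iff_exists_fun ℚ).mp hy_span
  have hcast : ∀ i, (a i : ℝ) = c' i := by
    have hz : ∑ i, ((a i : ℝ) - c' i) • ratToReal (v' i) = 0 := by
      simp only [sub_smul, Finset.sum_sub_distrib]
      rw [← ratToReal_sum a v', ha, ← hy]
      simp
    intro i
    have := Fintype.linearIndependent_iff.mp hli (fun i => (a i : ℝ) - c' i) hz i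
    linarith [this]
  refine ⟨a, fun i => ?_, ha.symm⟩
  have := hcast i ▸ hc i
  exact_mod_cast this

lemma exists_int_mul (a : ℚ) (q : ℕ) (hq : a.den ∣ q) : ∃ z : ℤ, (q : ℚ) * a = z := by
  obtain ⟨e, he⟩ := hq
  refine ⟨(e : ℤ) * a.num, ?_⟩
  have hden : (a.den : ℚ) * a = a.num := by
    nth_rewrite 2 [← Rat.num_div_den a]
    rw [mul_comm, div_mul_cancel₀]
    exact Nat.cast_ne_zero.mpr a.den_nz
  rw [he]
  push_cast
  rw [mul_comm (a.den : ℚ) (e : ℚ), mul_assoc, hden]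

lemma exists_nat_mul (a : ℚ) (q : ℕ) (hq : a.den ∣ q) (ha : 0 ≤ a) :
    ∃ c : ℕ, (q : ℚ) * a = c := by
  obtain ⟨z, hz⟩ := exists_int_mul a q hq
  have hz0 : 0 ≤ z := by
    have : (0 : ℚ) ≤ (z : ℚ) := hz ▸ mul_nonneg (by positivity) ha
    exact_mod_cast this
  refine ⟨z.toNat, by rw [hz]; norm_cast; omega⟩
/-- Gordan's lemma, extended version: for finitely generated submonoids `M ⊆ N` of `ℚ^d`,
the integral closure of `M` in `N`, which equals `ℝ₊M ∩ N`, is a finitely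
generated monoid. -/
theorem stmt4 {d : ℕ} (M N : AddSubmonoid (Fin d → ℚ)) (hMN : M ≤ N)
    (hM : M.FG) (hN : N.FG) :
    ∃ P : AddSubmonoid (Fin d → ℚ),
      (P : Set (Fin d → ℚ)) = {y | y ∈ N ∧ ∃ k : ℕ, 0 < k ∧ k • y ∈ M} ∧
      (P : Set (Fin d → ℚ)) = {y | y ∈ N ∧ ratToReal y ∈ realCone M} ∧
      P.FG := by
  classical
  obtain ⟨Sm, hSm⟩ := hM
  obtain ⟨Sn, hSn⟩ := hN
  obtain ⟨s, m, hm⟩ := finset_enum Sm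
  obtain ⟨t, nn, hnn⟩ := finset_enum Sn
  have hMcl : AddSubmonoid.closure (Set.range m) = M := by rw [hm, hSm]
  have hNcl : AddSubmonoid.closure (Set.range nn) = N := by rw [hnn, hSn]
  have hmM : ∀ i, m i ∈ M := fun i =>
    hMcl ▸ AddSubmonoid.subset_closure (Set.mem_range_self i)
  have hnnN : ∀ j, nn j ∈ N := fun j =>
    hNcl ▸ AddSubmonoid.subset_closure (Set.mem_range_self j)
  -- the rational cone predicate
  set QF : (Fin d → ℚ) → Prop :=
    fun y => ∃ a : Fin s → ℚ, (∀ i, 0 ≤ a i) ∧ y = ∑ i, a i • m i with hQF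
  have hQF0 : QF 0 := ⟨0, fun i => le_rfl, by simp⟩
  have hQFadd : ∀ y z, QF y → QF z → QF (y + z) := by
    rintro y z ⟨a, ha, rfl⟩ ⟨b, hb, rfl⟩
    exact ⟨a + b, fun i => add_nonneg (ha i) (hb i), by
      simp [add_smul, Finset.sum_add_distrib]⟩
  have hQFsmul : ∀ (q : ℚ) y, 0 ≤ q → QF y → QF (q • y) := by
    rintro q y hq ⟨a, ha, rfl⟩
    refine ⟨fun i => q * a i, fun i => mul_nonneg hq (ha i), ?_⟩
    rw [Finset.smul_sum]
    exact Finset.sum_congr rfl fun i _ => by simp [smul_smul]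
  have hMQF : ∀ y ∈ M, QF y := by
    intro y hy
    rw [← hMcl] at hy
    obtain ⟨b, rfl⟩ := (mem_closure_range_iff m y).mp hy
    exact ⟨fun i => (b i : ℚ), fun i => by positivity, by
      exact Finset.sum_congr rfl fun i _ => (Nat.cast_smul_eq_nsmul ℚ (b i) (m i)).symm⟩
  -- QF is closed under nonneg rational combinations
  have hQFsum : ∀ (k : ℕ) (a : Fin k → ℚ) (z : Fin k → (Fin d → ℚ)),
      (∀ i, 0 ≤ a i) → (∀ i, QF (z i)) → QF (∑ i, a i • z i) := by
    intro k
    induction k with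
    | zero => intro a z _ _; simpa using hQF0
    | succ k ih =>
      intro a z ha hz
      rw [Fin.sum_univ_succ]
      exact hQFadd _ _ (hQFsmul _ _ (ha 0) (hz 0))
        (ih _ _ (fun i => ha i.succ) (fun i => hz i.succ))
  -- QF y iff some positive multiple of y lies in M
  have hQFM : ∀ y, QF y → ∃ k : ℕ, 0 < k ∧ k • y ∈ M := by
    rintro y ⟨a, ha, rfl⟩
    set q : ℕ := ∏ i, (a i).den with hq
    have hq0 : 0 < q := Finset.prod_pos fun i _ => (a i).pos
    have hdvd : ∀ i, (a i).den ∣ q := fun i => Finset.dvd_prod_of_mem _ (Finset.mem_univ i)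
    have hcoef : ∀ i : Fin s, ∃ c : ℕ, (q : ℚ) * a i = c :=
      fun i => exists_nat_mul (a i) q (hdvd i) (ha i)
    choose c hc using hcoef
    refine ⟨q, hq0, ?_⟩
    have : q • (∑ i, a i • m i) = ∑ i, c i • m i := by
      rw [← Nat.cast_smul_eq_nsmul ℚ q, Finset.smul_sum]
      refine Finset.sum_congr rfl fun i _ => ?_
      rw [smul_smul, hc i, Nat.cast_smul_eq_nsmul ℚ (c i) (m i)]
    rw [this]
    exact AddSubmonoid.sum_mem _ fun i _ => AddSubmonoid.nsmul_mem _ (hmM i) _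
  have hkQF : ∀ y (k : ℕ), 0 < k → k • y ∈ M → QF y := by
    intro y k hk hkM
    have h1 : QF (k • y) := hMQF _ hkM
    have h2 : ((k : ℚ)⁻¹) • ((k : ℕ) • y) = y := by
      rw [← Nat.cast_smul_eq_nsmul ℚ k y, inv_smul_smul₀ (by exact_mod_cast hk.ne')]
    exact h2 ▸ hQFsmul _ _ (inv_nonneg.mpr (Nat.cast_nonneg k)) h1
  -- QF iff real cone membership
  have hQFreal : ∀ y, QF y → ratToReal y ∈ realCone M := by
    rintro y ⟨a, ha, rfl⟩
    exact ⟨s, fun i => (a i : ℝ), m, fun i => by show (0:ℝ) ≤ ((a i : ℚ) : ℝ); exact_mod_cast ha i, hmM, ratToReal_sum a m⟩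
  have hrealQF : ∀ y, ratToReal y ∈ realCone M → QF y := by
    rintro y ⟨n, cr, v, hcr, hvM, hyr⟩
    obtain ⟨k, c', w', h1, h2, h3, h4⟩ :=
      cone_caratheodory n cr (fun i => ratToReal (v i)) hcr
    choose jdx hjdx using h2
    set v' : Fin k → (Fin d → ℚ) := fun i => v (jdx i) with hv'
    have hw' : ∀ i, ratToReal (v' i) = w' i := fun i => hjdx i
    have hli : LinearIndependent ℝ (fun i => ratToReal (v' i)) := by
      rw [show (fun i => ratToReal (v' i)) = w' from funext hw']
      exact h3
    have hyr' : ratToReal y = ∑ i, c' i • ratToReal (v' i) := by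
      rw [show (fun i => ratToReal (v' i)) = w' from funext hw'] at *
      rw [hyr, ← h4]
      exact Finset.sum_congr rfl fun i _ => by rw [hw' i]
    obtain ⟨a, ha, hya⟩ := rat_coeffs v' c' hli h1 y hyr'
    exact hya ▸ hQFsum k a v' ha (fun i => hMQF _ (hvM (jdx i)))
  -- the subgroup generated by N and discreteness
  set G : AddSubgroup (Fin d → ℚ) := AddSubgroup.closure (Set.range nn) with hG
  have hNG : ∀ y ∈ N, y ∈ G := by
    intro y hy
    rw [← hNcl] at hy
    have : AddSubmonoid.closure (Set.range nn) ≤ G.toAddSubmonoid :=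
      AddSubmonoid.closure_le.mpr AddSubgroup.subset_closure
    exact this hy
  set q0 : ℕ := ∏ i, ∏ j, (nn i j).den with hq0def
  have hq00 : 0 < q0 := Finset.prod_pos fun i _ => Finset.prod_pos fun j _ => (nn i j).pos
  set D : AddSubgroup (Fin d → ℚ) :=
    { carrier := {x | ∀ j, ∃ z : ℤ, (q0 : ℚ) * x j = z}
      zero_mem' := fun j => ⟨0, by simp⟩
      add_mem' := by
        rintro x y hx hy j
        obtain ⟨z1, hz1⟩ := hx j
        obtain ⟨z2, hz2⟩ := hy j
        exact ⟨z1 + z2, by simp only [Pi.add_apply]; push_cast; rw [← hz1, ← hz2]; ring⟩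
      neg_mem' := by
        rintro x hx j
        obtain ⟨z, hz⟩ := hx j
        exact ⟨-z, by simp only [Pi.neg_apply]; push_cast; rw [← hz]; ring⟩ } with hD
  have hGD : ∀ x ∈ G, ∀ j, ∃ z : ℤ, (q0 : ℚ) * x j = z := by
    have hsub : G ≤ D := by
      rw [hG]
      refine (AddSubgroup.closure_le D).mpr ?_
      rintro x ⟨i, rfl⟩
      show ∀ j, ∃ z : ℤ, (q0 : ℚ) * nn i j = z
      intro j
      refine exists_int_mul (nn i j) q0 ?_
      exact dvd_trans (Finset.dvd_prod_of_mem (fun j' => (nn i j').den) (Finset.mem_univ j))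
        (Finset.dvd_prod_of_mem (fun i => ∏ j, (nn i j).den) (Finset.mem_univ i))
    exact fun x hx => hsub hx
  -- the finite "box" set
  set F : Set (Fin d → ℚ) :=
    {z | z ∈ G ∧ ∃ a : Fin s → ℚ, (∀ i, 0 ≤ a i ∧ a i ≤ 1) ∧ z = ∑ i, a i • m i} with hF
  have hFfin : F.Finite := by
    set B : Fin d → ℚ := fun j => ∑ i, |m i j| with hB
    set Cb : Fin d → ℤ := fun j => ⌈(q0 : ℚ) * B j⌉ with hCb
    have : F ⊆ Set.pi Set.univ
        (fun j => (fun z : ℤ => (z : ℚ) / q0) '' (Set.Icc (-(Cb j)) (Cb j))) := by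
      rintro z ⟨hzG, a, ha, rfl⟩ j _
      obtain ⟨w, hw⟩ := hGD _ hzG j
      have hq0ne : (q0 : ℚ) ≠ 0 := by positivity
      have habs : |(∑ i, a i • m i) j| ≤ B j := by
        rw [Finset.sum_apply]
        refine le_trans (Finset.abs_sum_le_sum_abs _ _) ?_
        refine Finset.sum_le_sum fun i _ => ?_
        rw [Pi.smul_apply, smul_eq_mul, abs_mul, abs_of_nonneg (ha i).1]
        exact mul_le_of_le_one_left (abs_nonneg _) (ha i).2
      have hwabs : |w| ≤ Cb j := by
        have h1 : |(w : ℚ)| ≤ (q0 : ℚ) * B j := by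
          rw [← hw, abs_mul, abs_of_nonneg (by positivity : (0:ℚ) ≤ (q0:ℚ))]
          exact mul_le_mul_of_nonneg_left habs (by positivity)
        have h2 : ((q0 : ℚ)) * B j ≤ ((Cb j : ℤ) : ℚ) := Int.le_ceil _
        have : ((|w| : ℤ) : ℚ) ≤ ((Cb j : ℤ) : ℚ) := by
          push_cast
          push_cast at h1
          exact le_trans h1 h2
        exact_mod_cast this
      refine ⟨w, Set.mem_Icc.mpr (abs_le.mp hwabs), ?_⟩
      show (w : ℚ) / q0 = (∑ i, a i • m i) j
      rw [div_eq_iff hq0ne]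
      linarith [hw]
    exact Set.Finite.subset (Set.Finite.pi fun j => Set.Finite.image _ (Set.finite_Icc _ _)) this
  -- H = G ∩ cone
  set H : AddSubmonoid (Fin d → ℚ) :=
    { carrier := {y | y ∈ G ∧ QF y}
      zero_mem' := ⟨zero_mem _, hQF0⟩
      add_mem' := fun hx hy => ⟨add_mem hx.1 hy.1, hQFadd _ _ hx.2 hy.2⟩ } with hH
  have hmG : ∀ i, m i ∈ G := fun i => hNG _ (hMN (hmM i))
  have hHcl : AddSubmonoid.closure (Set.range m ∪ F) = H := by
    apply le_antisymm
    · apply AddSubmonoid.closure_le.mpr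
      rintro x (⟨i, rfl⟩ | hxF)
      · exact ⟨hmG i, hMQF _ (hmM i)⟩
      · exact ⟨hxF.1, ⟨hxF.2.choose, fun i => (hxF.2.choose_spec.1 i).1,
          hxF.2.choose_spec.2⟩⟩
    · rintro y ⟨hyG, a, ha, rfl⟩
      set b : Fin s → ℕ := fun i => (⌊a i⌋).toNat with hb
      have hba : ∀ i, (b i : ℚ) = (⌊a i⌋ : ℤ) := by
        intro i
        have : (0 : ℤ) ≤ ⌊a i⌋ := Int.floor_nonneg.mpr (ha i)
        have h2 := congrArg (fun zz : ℤ => (zz : ℚ)) (Int.toNat_of_nonneg this)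
        exact_mod_cast h2
      have hfr : ∀ i, 0 ≤ a i - b i ∧ a i - b i ≤ 1 := by
        intro i
        rw [hba i]
        constructor
        · have := Int.floor_le (a i); linarith
        · have := Int.lt_floor_add_one (a i); linarith
      set z : Fin d → ℚ := ∑ i, (a i - b i) • m i with hz
      have hzsplit : (∑ i, (b i : ℚ) • m i) + z = ∑ i, a i • m i := by
        rw [hz, ← Finset.sum_add_distrib]
        refine Finset.sum_congr rfl fun i _ => ?_
        rw [← add_smul]
        have : (b i : ℚ) + (a i - b i) = a i := by ring
        rw [this]
      have hzG : z ∈ G := by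
        have hbG : (∑ i, (b i : ℚ) • m i) ∈ G := by
          refine AddSubgroup.sum_mem _ fun i _ => ?_
          rw [Nat.cast_smul_eq_nsmul ℚ (b i) (m i)]
          exact AddSubgroup.nsmul_mem _ (hmG i) _
        have : z = (∑ i, a i • m i) - (∑ i, (b i : ℚ) • m i) := by
          rw [← hzsplit]; abel
        rw [this]
        exact sub_mem hyG hbG
      have hzF : z ∈ F := ⟨hzG, fun i => a i - b i, hfr, rfl⟩
      rw [← hzsplit]
      refine AddSubmonoid.add_mem _ ?_ (AddSubmonoid.subset_closure (Or.inr hzF))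
      refine AddSubmonoid.sum_mem _ fun i _ => ?_
      rw [Nat.cast_smul_eq_nsmul ℚ (b i) (m i)]
      refine AddSubmonoid.nsmul_mem _ ?_ (b i)
      exact AddSubmonoid.subset_closure (Set.mem_union_left _ (Set.mem_range_self i))
  have hHfg : H.FG := by
    refine ⟨((Set.finite_range m).union hFfin).toFinset, ?_⟩
    rw [Set.Finite.coe_toFinset, hHcl]
  obtain ⟨Sh, hSh⟩ := hHfg
  obtain ⟨r, hh, hhr⟩ := finset_enum Sh
  have hHcl2 : AddSubmonoid.closure (Set.range hh) = H := by rw [hhr, hSh]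
  have hhH : ∀ kk, hh kk ∈ H := fun kk =>
    hHcl2 ▸ AddSubmonoid.subset_closure (Set.mem_range_self kk)
  -- the kernel monoid and the final P
  set g : ((Fin t ⊕ Fin r) → ℕ) →+ (Fin d → ℚ) :=
    { toFun := fun x => (∑ j, x (Sum.inl j) • nn j) - (∑ kk, x (Sum.inr kk) • hh kk)
      map_zero' := by simp
      map_add' := fun x y => by
        simp only [Pi.add_apply, add_nsmul, Finset.sum_add_distrib]
        abel } with hg
  set pr : ((Fin t ⊕ Fin r) → ℕ) →+ (Fin d → ℚ) :=
    { toFun := fun x => ∑ j, x (Sum.inl j) • nn j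
      map_zero' := by simp
      map_add' := fun x y => by
        simp only [Pi.add_apply, add_nsmul, Finset.sum_add_distrib] } with hpr
  set P : AddSubmonoid (Fin d → ℚ) := AddSubmonoid.map pr (AddMonoidHom.mker g) with hP
  have hPfg : P.FG := by
    obtain ⟨SK, hSK⟩ := mker_fg g
    refine ⟨SK.image pr, ?_⟩
    rw [Finset.coe_image, ← AddMonoidHom.map_mclosure, hSK]
  have hPcarrier : (P : Set (Fin d → ℚ)) = {y | y ∈ N ∧ QF y} := by
    ext y
    constructor
    · rintro ⟨x, hxK, rfl⟩
      have hgx : g x = 0 := hxK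
      have hAB : (∑ j, x (Sum.inl j) • nn j) = (∑ kk, x (Sum.inr kk) • hh kk) :=
        sub_eq_zero.mp hgx
      constructor
      · show (∑ j, x (Sum.inl j) • nn j) ∈ N
        exact AddSubmonoid.sum_mem _ fun j _ => AddSubmonoid.nsmul_mem _ (hnnN j) _
      · show QF (∑ j, x (Sum.inl j) • nn j)
        rw [hAB]
        have : (∑ kk, x (Sum.inr kk) • hh kk) ∈ H :=
          AddSubmonoid.sum_mem _ fun kk _ => AddSubmonoid.nsmul_mem _ (hhH kk) _
        exact this.2
    · rintro ⟨hyN, hyQF⟩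
      have hyH : y ∈ H := ⟨hNG y hyN, hyQF⟩
      obtain ⟨bb, hbb⟩ := (mem_closure_range_iff nn y).mp (hNcl ▸ hyN)
      obtain ⟨cc, hcc⟩ := (mem_closure_range_iff hh y).mp (hHcl2 ▸ hyH)
      refine ⟨Sum.elim bb cc, ?_, ?_⟩
      · show g (Sum.elim bb cc) = 0
        show (∑ j, bb j • nn j) - (∑ kk, cc kk • hh kk) = 0
        rw [← hbb, ← hcc, sub_self]
      · show (∑ j, bb j • nn j) = y
        exact hbb.symm
  refine ⟨P, ?_, ?_, hPfg⟩
  · rw [hPcarrier]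
    ext y
    constructor
    · rintro ⟨hyN, hyQF⟩
      exact ⟨hyN, hQFM y hyQF⟩
    · rintro ⟨hyN, k, hk, hkM⟩
      exact ⟨hyN, hkQF y k hk hkM⟩
  · rw [hPcarrier]
    ext y
    constructor
    · rintro ⟨hyN, hyQF⟩
      exact ⟨hyN, hQFreal y hyQF⟩
    · rintro ⟨hyN, hyr⟩
      exact ⟨hyN, hrealQF y hyr⟩
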